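/- Let q ≥ 2 be an integer and let B = (b₁,…,bₙ) be an LLL-reduced basis of a lattice ℒ with all entries of B lying in (1/q)ℤ. Then for every j, ‖b_j‖ ≤ q^{n−1} · 2^{n²/4} · det(ℒ). In particular, all entries of B lie in [−p/q, p/q] with p ≤ (2^{n/4} q)^n · det(ℒ). -/

import Mathlib

open scoped RealInnerProductSpace BigOperators
open Matrix
open InnerProductSpace

noncomputable section

/-- The set of integer linear combinations of `B 0, …, B (n-1)`. -/
def zspan {d n : ℕ} (B : Fin n → EuclideanSpace ℝ (Fin d)) : Set (EuclideanSpace ℝ (Fin d)) :=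
  {x | ∃ c : Fin n → ℤ, x = ∑ i, (c i : ℝ) • B i}

/-- `L` is a lattice of rank `n`: the ℤ-span of `n` ℝ-linearly independent vectors. -/
def IsLattice {d : ℕ} (L : Set (EuclideanSpace ℝ (Fin d))) (n : ℕ) : Prop :=
  ∃ B : Fin n → EuclideanSpace ℝ (Fin d), LinearIndependent ℝ B ∧ L = zspan B

/-- The dual set `S* := {w ∈ span_ℝ S : ⟨w,y⟩ ∈ ℤ for all y ∈ S}`. -/
def dualSet {d : ℕ} (S : Set (EuclideanSpace ℝ (Fin d))) : Set (EuclideanSpace ℝ (Fin d)) :=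
  {w | w ∈ Submodule.span ℝ S ∧ ∀ y ∈ S, ∃ m : ℤ, ⟪w, y⟫ = (m : ℝ)}

/-- Orthogonal projection onto the orthogonal complement of `span_ℝ S`. -/
def projPerp {d : ℕ} (S : Set (EuclideanSpace ℝ (Fin d))) (x : EuclideanSpace ℝ (Fin d)) : EuclideanSpace ℝ (Fin d) :=
  (Submodule.orthogonalProjectionOnto (Submodule.span ℝ S)ᗮ x : EuclideanSpace ℝ (Fin d))

/-- `det(ℒ) = √(det(BᵀB))`, computed from a basis `B` via its Gram matrix. -/
def gramDet {d n : ℕ} (B : Fin n → EuclideanSpace ℝ (Fin d)) : ℝ :=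
  Real.sqrt (Matrix.det (Matrix.of fun i j => ⟪B i, B j⟫))

/-- The Gram–Schmidt orthogonalization `b̃ᵢ = Π_{{b₁,…,b_(i-1)}^⊥}(bᵢ)`. -/
def gsVec {d n : ℕ} (B : Fin n → EuclideanSpace ℝ (Fin d)) (i : Fin n) : EuclideanSpace ℝ (Fin d) :=
  projPerp (B '' {j | j < i}) (B i)

/-- The Gram–Schmidt coefficients `μ_(i,j) = ⟨b̃ᵢ, bⱼ⟩ / ‖b̃ᵢ‖²`. -/
def mu {d n : ℕ} (B : Fin n → EuclideanSpace ℝ (Fin d)) (i j : Fin n) : ℝ :=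
  ⟪gsVec B i, B j⟫ / ‖gsVec B i‖ ^ 2

/-- `B` is an LLL-reduced basis (with parameter δ = 3/4). -/
def IsLLLReduced {d n : ℕ} (B : Fin n → EuclideanSpace ℝ (Fin d)) : Prop :=
  LinearIndependent ℝ B ∧
  (∀ i j : Fin n, i < j → |mu B i j| ≤ 1 / 2) ∧
  (∀ (i : ℕ) (h : i + 1 < n),
    (3 / 4) * ‖gsVec B ⟨i, Nat.lt_of_succ_lt h⟩‖ ^ 2 ≤
      ‖gsVec B ⟨i + 1, h⟩‖ ^ 2 +
        (mu B ⟨i, Nat.lt_of_succ_lt h⟩ ⟨i + 1, h⟩) ^ 2 * ‖gsVec B ⟨i, Nat.lt_of_succ_lt h⟩‖ ^ 2)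

instance finWFLT (n : ℕ) : @WellFoundedLT (Fin n)
    (@Preorder.toLT _ (@PartialOrder.toPreorder _ (@SemilatticeInf.toPartialOrder _
      (@Lattice.toSemilatticeInf _ (@DistribLattice.toLattice _
        (@instDistribLatticeOfLinearOrder _ (Fin.instLinearOrder (n := n)))))))) :=
  inferInstanceAs (@WellFoundedLT (Fin n) (instLTFin (n := n)))

theorem gsVec_eq {d n : ℕ} (B : Fin n → EuclideanSpace ℝ (Fin d)) (i : Fin n) :
    gsVec B i = gramSchmidt ℝ B i := by
  have hset : (B '' {j | j < i}) = B '' Set.Iio i := rfl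
  rw [gsVec, projPerp, hset]
  rw [← Submodule.starProjection_apply]
  apply Submodule.eq_starProjection_of_mem_orthogonal
  · -- gramSchmidt ℝ B i ∈ (span (B '' Iio i))ᗮ
    rw [← span_gramSchmidt_Iio ℝ B i]
    intro y hy
    induction hy using Submodule.span_induction with
    | mem x hx =>
      obtain ⟨k, hk, rfl⟩ := hx
      exact gramSchmidt_orthogonal ℝ B ((ne_of_lt hk))
    | zero => simp
    | add x y _ _ hx hy => rw [inner_add_left, hx, hy, add_zero]
    | smul a x _ hx => rw [inner_smul_left, hx, mul_zero]
  · -- B i - gramSchmidt ℝ B i ∈ (spanᗮ)ᗮ = span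
    rw [Submodule.orthogonal_orthogonal]
    have := gramSchmidt_def ℝ B i
    have h2 : B i - gramSchmidt ℝ B i =
        ∑ k ∈ Finset.Iio i, ((Submodule.span ℝ {gramSchmidt ℝ B k}).starProjection (B i) :
          EuclideanSpace ℝ (Fin d)) := by
      rw [this]; abel
    rw [h2, ← span_gramSchmidt_Iio ℝ B i]
    refine Submodule.sum_mem _ fun k hk => ?_
    rw [Submodule.starProjection_singleton]
    exact Submodule.smul_mem _ _ (Submodule.subset_span ⟨k, Finset.mem_Iio.mp hk, rfl⟩)

def gsc {d n : ℕ} (B : Fin n → EuclideanSpace ℝ (Fin d)) (i k : Fin n) : ℝ :=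
  ⟪gramSchmidt ℝ B k, B i⟫ / ‖gramSchmidt ℝ B k‖ ^ 2

theorem gs_repr {d n : ℕ} {B : Fin n → EuclideanSpace ℝ (Fin d)} (hB : LinearIndependent ℝ B)
    (i : Fin n) : B i = ∑ k, gsc B i k • gramSchmidt ℝ B k := by
  set g := gramSchmidt ℝ B with hg
  have key : ∀ x ∈ Submodule.span ℝ (Set.range g), (∀ k, ⟪g k, x⟫ = 0) → x = 0 := by
    intro x hxmem hgk
    have hall : ∀ y ∈ Submodule.span ℝ (Set.range g), ⟪y, x⟫ = 0 := by
      intro y hy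
      induction hy using Submodule.span_induction with
      | mem z hz => obtain ⟨k, rfl⟩ := hz; exact hgk k
      | zero => simp
      | add y z _ _ hy hz => rw [inner_add_left, hy, hz, add_zero]
      | smul a y _ hy => rw [inner_smul_left, hy, mul_zero]
    have hxx := hall x hxmem
    rwa [inner_self_eq_zero] at hxx
  have h := key (B i - ∑ k, gsc B i k • g k) ?_ ?_
  · rw [← sub_eq_zero]; exact h
  · apply Submodule.sub_mem
    · rw [span_gramSchmidt ℝ B]
      exact Submodule.subset_span ⟨i, rfl⟩
    · exact Submodule.sum_mem _ fun k _ => Submodule.smul_mem _ _ (Submodule.subset_span ⟨k, rfl⟩)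
  · intro k
    have hk0 : ‖g k‖ ^ 2 ≠ 0 := pow_ne_zero _ (norm_ne_zero_iff.mpr (gramSchmidt_ne_zero k hB))
    rw [inner_sub_right, inner_sum]
    have : ∀ l, ⟪g k, gsc B i l • g l⟫ = if l = k then ⟪g k, B i⟫ else 0 := by
      intro l
      rw [real_inner_smul_right]
      by_cases h : l = k
      · subst h
        rw [if_pos rfl, gsc, real_inner_self_eq_norm_sq]
        rw [hg] at hk0 ⊢
        exact div_mul_cancel₀ _ hk0
      · rw [if_neg h, gramSchmidt_orthogonal ℝ B (Ne.symm h), mul_zero]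
    simp only [this, Finset.sum_ite_eq' Finset.univ, Finset.mem_univ, if_pos, sub_self]

theorem gram_entry {d n : ℕ} {B : Fin n → EuclideanSpace ℝ (Fin d)} (hB : LinearIndependent ℝ B)
    (i j : Fin n) : ⟪B i, B j⟫ = ∑ k, gsc B i k * gsc B j k * ‖gramSchmidt ℝ B k‖ ^ 2 := by
  set g := gramSchmidt ℝ B with hg
  conv_lhs => rw [gs_repr hB i, gs_repr hB j]
  rw [sum_inner]
  refine Finset.sum_congr rfl fun k _ => ?_
  rw [inner_sum]
  simp only [real_inner_smul_left, real_inner_smul_right]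
  rw [Finset.sum_eq_single k]
  · rw [real_inner_self_eq_norm_sq]; ring
  · intro l _ hl
    rw [gramSchmidt_orthogonal ℝ B hl.symm, mul_zero, mul_zero]
  · intro h; exact absurd (Finset.mem_univ k) h

theorem gsc_diag {d n : ℕ} {B : Fin n → EuclideanSpace ℝ (Fin d)} (hB : LinearIndependent ℝ B)
    (i : Fin n) : gsc B i i = 1 := by
  set g := gramSchmidt ℝ B with hg
  have hk0 : ‖g i‖ ^ 2 ≠ 0 := pow_ne_zero _ (norm_ne_zero_iff.mpr (gramSchmidt_ne_zero i hB))
  have hib : ⟪g i, B i⟫ = ‖g i‖ ^ 2 := by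
    conv_lhs => rw [gramSchmidt_def' ℝ B i]
    rw [inner_add_right, real_inner_self_eq_norm_sq, inner_sum]
    have : ∀ k ∈ Finset.Iio i, ⟪g i, ((Submodule.span ℝ {g k}).starProjection (B i) :
        EuclideanSpace ℝ (Fin d))⟫ = 0 := by
      intro k hk
      rw [Submodule.starProjection_singleton, real_inner_smul_right,
        gramSchmidt_orthogonal ℝ B (ne_of_gt (Finset.mem_Iio.mp hk)), mul_zero]
    rw [Finset.sum_congr rfl this, Finset.sum_const_zero, add_zero]
  rw [gsc, hib, div_self hk0]

theorem gsc_triangular {d n : ℕ} (B : Fin n → EuclideanSpace ℝ (Fin d))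
    {i k : Fin n} (h : i < k) : gsc B i k = 0 := by
  rw [gsc, gramSchmidt_inv_triangular ℝ B h, zero_div]

theorem gram_det_eq {d n : ℕ} {B : Fin n → EuclideanSpace ℝ (Fin d)} (hB : LinearIndependent ℝ B) :
    Matrix.det (Matrix.of fun i j => ⟪B i, B j⟫) = ∏ k, ‖gramSchmidt ℝ B k‖ ^ 2 := by
  set g := gramSchmidt ℝ B with hg
  set M : Matrix (Fin n) (Fin n) ℝ := Matrix.of (gsc B) with hM
  set D : Matrix (Fin n) (Fin n) ℝ := Matrix.diagonal (fun k => ‖g k‖ ^ 2) with hD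
  have hGram : (Matrix.of fun i j => ⟪B i, B j⟫) = M * D * Mᵀ := by
    ext i j
    rw [Matrix.mul_apply]
    simp only [hD, hM, Matrix.of_apply, Matrix.mul_diagonal, Matrix.transpose_apply, Matrix.of_apply]
    rw [gram_entry hB i j]
    exact Finset.sum_congr rfl fun k _ => by ring
  have hMt : Mᵀ.BlockTriangular id := by
    intro a b hab
    exact gsc_triangular B hab
  have hdetMt : Mᵀ.det = 1 := by
    rw [Matrix.det_of_upperTriangular hMt]
    simp only [Matrix.transpose_apply, hM, Matrix.of_apply]
    exact Finset.prod_eq_one fun i _ => gsc_diag hB i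
  have hdetM : M.det = 1 := by rw [← Matrix.det_transpose]; exact hdetMt
  rw [hGram, Matrix.det_mul, Matrix.det_mul, hdetM, hdetMt, Matrix.det_diagonal, one_mul, mul_one]

theorem gs_decay {d n : ℕ} {B : Fin n → EuclideanSpace ℝ (Fin d)}
    (hstep : ∀ (i : ℕ) (h : i + 1 < n),
      ‖gramSchmidt ℝ B ⟨i, Nat.lt_of_succ_lt h⟩‖ ^ 2 ≤ 2 * ‖gramSchmidt ℝ B ⟨i + 1, h⟩‖ ^ 2)
    (a b : ℕ) (ha : a < n) (hb : b < n) (hab : a ≤ b) :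
    ‖gramSchmidt ℝ B ⟨a, ha⟩‖ ^ 2 ≤ 2 ^ (b - a) * ‖gramSchmidt ℝ B ⟨b, hb⟩‖ ^ 2 := by
  induction b, hab using Nat.le_induction with
  | base => simp
  | succ b hab ih =>
    have hb' : b < n := Nat.lt_of_succ_lt hb
    calc ‖gramSchmidt ℝ B ⟨a, ha⟩‖ ^ 2 ≤ 2 ^ (b - a) * ‖gramSchmidt ℝ B ⟨b, hb'⟩‖ ^ 2 := ih hb'
      _ ≤ 2 ^ (b - a) * (2 * ‖gramSchmidt ℝ B ⟨b + 1, hb⟩‖ ^ 2) := by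
          have := hstep b hb
          have h2 : (0:ℝ) ≤ 2 ^ (b - a) := by positivity
          nlinarith
      _ = 2 ^ (b + 1 - a) * ‖gramSchmidt ℝ B ⟨b + 1, hb⟩‖ ^ 2 := by
          rw [show b + 1 - a = (b - a) + 1 by omega, pow_succ]
          ring

theorem normsq_le {d n : ℕ} {B : Fin n → EuclideanSpace ℝ (Fin d)}
    (hli : LinearIndependent ℝ B)
    (hmu : ∀ k j : Fin n, k < j → |gsc B j k| ≤ 1 / 2)
    (hstep : ∀ (i : ℕ) (h : i + 1 < n),
      ‖gramSchmidt ℝ B ⟨i, Nat.lt_of_succ_lt h⟩‖ ^ 2 ≤ 2 * ‖gramSchmidt ℝ B ⟨i + 1, h⟩‖ ^ 2)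
    (j : Fin n) :
    ‖B j‖ ^ 2 ≤ 2 ^ (j : ℕ) * ‖gramSchmidt ℝ B j‖ ^ 2 := by
  set g := gramSchmidt ℝ B with hg
  have hBj : ‖B j‖ ^ 2 = ∑ k, gsc B j k * gsc B j k * ‖g k‖ ^ 2 := by
    rw [← real_inner_self_eq_norm_sq]; exact gram_entry hli j j
  set w : Fin n → ℝ := fun k =>
    if (k : ℕ) = (j : ℕ) then ‖g j‖ ^ 2
    else if (k : ℕ) < (j : ℕ) then (1/4) * 2 ^ ((j : ℕ) - (k : ℕ)) * ‖g j‖ ^ 2 else 0 with hw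
  have hterm : ∀ k, gsc B j k * gsc B j k * ‖g k‖ ^ 2 ≤ w k := by
    intro k
    rcases lt_trichotomy (k : ℕ) (j : ℕ) with h | h | h
    · have hkj : k < j := h
      have h1 : |gsc B j k| ≤ 1/2 := hmu k j hkj
      have h2 : ‖g k‖ ^ 2 ≤ 2 ^ ((j:ℕ) - (k:ℕ)) * ‖g j‖ ^ 2 := by
        have := gs_decay hstep (k : ℕ) (j : ℕ) k.isLt j.isLt (le_of_lt h)
        simpa using this
      have h3 : gsc B j k * gsc B j k ≤ 1/4 := by
        have := abs_le.mp h1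
        nlinarith
      have h4 : (0:ℝ) ≤ ‖g k‖ ^ 2 := by positivity
      have h5 : (0:ℝ) ≤ gsc B j k * gsc B j k := mul_self_nonneg _
      rw [hw]
      simp only [if_neg (ne_of_lt h), if_pos h]
      nlinarith
    · have hkj : k = j := Fin.ext h
      subst hkj
      rw [hw, gsc_diag hli]
      simp
    · rw [gsc_triangular B (show j < k from h), hw]
      simp only [if_neg (ne_of_gt h), if_neg (not_lt_of_gt h)]
      norm_num
  have hsum : ∑ k, w k ≤ 2 ^ (j : ℕ) * ‖g j‖ ^ 2 := by
    have hrw : ∑ k, w k = ∑ m ∈ Finset.range n, (if m = (j:ℕ) then ‖g j‖ ^ 2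
        else if m < (j : ℕ) then (1/4) * 2 ^ ((j : ℕ) - m) * ‖g j‖ ^ 2 else 0) := by
      rw [← Fin.sum_univ_eq_sum_range (fun m => if m = (j:ℕ) then ‖g j‖ ^ 2
        else if m < (j : ℕ) then (1/4) * 2 ^ ((j : ℕ) - m) * ‖g j‖ ^ 2 else 0) n]
    rw [hrw]
    have hjn : (j : ℕ) < n := j.isLt
    have hsplit : ∑ m ∈ Finset.range n, (if m = (j:ℕ) then ‖g j‖ ^ 2
        else if m < (j : ℕ) then (1/4) * 2 ^ ((j : ℕ) - m) * ‖g j‖ ^ 2 else 0)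
        = ‖g j‖ ^ 2 + ∑ m ∈ Finset.range (j : ℕ), (1/4) * 2 ^ ((j : ℕ) - m) * ‖g j‖ ^ 2 := by
      have hFsplit : ∀ m, (if m = (j:ℕ) then ‖g j‖ ^ 2
          else if m < (j : ℕ) then (1/4) * 2 ^ ((j : ℕ) - m) * ‖g j‖ ^ 2 else 0)
          = (if m = (j:ℕ) then ‖g j‖ ^ 2 else 0)
            + (if m < (j : ℕ) then (1/4) * 2 ^ ((j : ℕ) - m) * ‖g j‖ ^ 2 else 0) := by
        intro m
        by_cases h1 : m = (j:ℕ)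
        · subst h1; simp [lt_irrefl]
        · by_cases h2 : m < (j:ℕ) <;> simp [h1, h2]
      simp only [hFsplit]
      rw [Finset.sum_add_distrib]
      congr 1
      · rw [Finset.sum_ite_eq' (Finset.range n) (j:ℕ) (fun _ => ‖g j‖ ^ 2),
          if_pos (Finset.mem_range.mpr hjn)]
      · rw [← Finset.sum_filter]
        congr 1
        ext m
        simp only [Finset.mem_filter, Finset.mem_range]
        omega
    rw [hsplit]
    have hgeo : ∑ m ∈ Finset.range (j : ℕ), (2:ℝ) ^ ((j : ℕ) - m) = 2 ^ ((j:ℕ) + 1) - 2 := by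
      have h1 : ∑ m ∈ Finset.range (j : ℕ), (2:ℝ) ^ ((j : ℕ) - m)
          = ∑ m ∈ Finset.range (j : ℕ), (2:ℝ) ^ (m + 1) := by
        rw [← Finset.sum_range_reflect (fun m => (2:ℝ) ^ (m + 1)) (j : ℕ)]
        refine Finset.sum_congr rfl fun m hm => ?_
        have hm' := Finset.mem_range.mp hm
        congr 1
        omega
      rw [h1]
      have h2 : ∑ m ∈ Finset.range (j : ℕ), (2:ℝ) ^ (m+1) = 2 * ∑ m ∈ Finset.range (j : ℕ), (2:ℝ) ^ m := by
        rw [Finset.mul_sum]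
        exact Finset.sum_congr rfl fun m _ => by ring
      rw [h2, geom_sum_eq (by norm_num : (2:ℝ) ≠ 1)]
      ring
    have hsum2 : ∑ m ∈ Finset.range (j : ℕ), (1/4) * (2:ℝ) ^ ((j : ℕ) - m) * ‖g j‖ ^ 2
        = (1/4) * (∑ m ∈ Finset.range (j : ℕ), (2:ℝ) ^ ((j : ℕ) - m)) * ‖g j‖ ^ 2 := by
      rw [Finset.mul_sum, Finset.sum_mul]
    rw [hsum2, hgeo]
    have hpow : (1:ℝ) ≤ 2 ^ (j:ℕ) := one_le_pow₀ (by norm_num)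
    have h0 : (0:ℝ) ≤ ‖g j‖ ^ 2 := by positivity
    have : (2:ℝ) ^ ((j:ℕ) + 1) = 2 * 2 ^ (j:ℕ) := by ring
    nlinarith
  calc ‖B j‖ ^ 2 = ∑ k, gsc B j k * gsc B j k * ‖g k‖ ^ 2 := hBj
    _ ≤ ∑ k, w k := Finset.sum_le_sum fun k _ => hterm k
    _ ≤ 2 ^ (j : ℕ) * ‖g j‖ ^ 2 := hsum

theorem coord_le_norm {d : ℕ} (x : EuclideanSpace ℝ (Fin d)) (t : Fin d) : |x t| ≤ ‖x‖ := by
  rw [EuclideanSpace.norm_eq, ← Real.sqrt_sq_eq_abs]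
  apply Real.sqrt_le_sqrt
  have : |x t| ^ 2 ≤ ∑ s, ‖x s‖ ^ 2 := by
    have := Finset.single_le_sum (f := fun s => ‖x s‖ ^ 2) (fun s _ => by positivity)
      (Finset.mem_univ t)
    simpa [Real.norm_eq_abs, sq_abs] using this
  simpa [sq_abs] using this

theorem stmt15 {d n : ℕ} (q : ℕ) (hq : 2 ≤ q) (B : Fin n → EuclideanSpace ℝ (Fin d))
    (hB : IsLLLReduced B)
    (hent : ∀ (j : Fin n) (i : Fin d), ∃ m : ℤ, B j i = (m : ℝ) / (q : ℝ)) :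
    (∀ j : Fin n, ‖B j‖ ≤ (q : ℝ) ^ (n - 1) * 2 ^ ((n : ℝ) ^ 2 / 4) * gramDet B) ∧
    ∃ p : ℝ, p ≤ ((2 : ℝ) ^ ((n : ℝ) / 4) * (q : ℝ)) ^ n * gramDet B ∧
      ∀ (j : Fin n) (i : Fin d), |B j i| ≤ p / (q : ℝ) := by
  obtain ⟨hli, hmu0, hsize0⟩ := hB
  have hqpos : (0:ℝ) < q := by positivity
  set g := gramSchmidt ℝ B with hg
  have mu_eq : ∀ i j : Fin n, mu B i j = gsc B j i := by
    intro i j; rw [mu, gsVec_eq, gsc]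
  have hmu' : ∀ k j : Fin n, k < j → |gsc B j k| ≤ 1 / 2 := by
    intro k j h; rw [← mu_eq]; exact hmu0 k j h
  have hstep : ∀ (i : ℕ) (h : i + 1 < n),
      ‖g ⟨i, Nat.lt_of_succ_lt h⟩‖ ^ 2 ≤ 2 * ‖g ⟨i + 1, h⟩‖ ^ 2 := by
    intro i h
    have h1 := hsize0 i h
    rw [gsVec_eq, gsVec_eq, mu_eq] at h1
    have h2 : |gsc B ⟨i+1, h⟩ ⟨i, Nat.lt_of_succ_lt h⟩| ≤ 1/2 :=
      hmu' _ _ (by simp [Fin.lt_def])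
    set m := gsc B ⟨i+1, h⟩ ⟨i, Nat.lt_of_succ_lt h⟩
    have hm2 : m ^ 2 ≤ 1/4 := by
      have := abs_le.mp h2; nlinarith
    have hx : (0:ℝ) ≤ ‖g ⟨i, Nat.lt_of_succ_lt h⟩‖ ^ 2 := by positivity
    nlinarith
  -- product bound
  obtain ⟨S, hS⟩ : ∃ S : ℕ, S = ∑ j : Fin n, (j : ℕ) := ⟨_, rfl⟩
  obtain ⟨PB, hPB⟩ : ∃ PB : ℝ, PB = ∏ j, ‖B j‖ := ⟨_, rfl⟩
  have hPBnn : 0 ≤ PB := hPB ▸ Finset.prod_nonneg fun i _ => norm_nonneg _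
  have hprodsq : PB ^ 2 ≤ 2 ^ S * ∏ k, ‖g k‖ ^ 2 := by
    rw [hPB, ← Finset.prod_pow]
    calc ∏ j, ‖B j‖ ^ 2 ≤ ∏ j : Fin n, ((2:ℝ) ^ (j:ℕ) * ‖g j‖ ^ 2) :=
          Finset.prod_le_prod (fun i _ => by positivity)
            (fun i _ => normsq_le hli hmu' hstep i)
      _ = (∏ j : Fin n, (2:ℝ) ^ (j:ℕ)) * ∏ k, ‖g k‖ ^ 2 := Finset.prod_mul_distrib
      _ = 2 ^ S * ∏ k, ‖g k‖ ^ 2 := by rw [Finset.prod_pow_eq_pow_sum, hS]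
  have hdet_nn : 0 ≤ ∏ k, ‖g k‖ ^ 2 := Finset.prod_nonneg fun i _ => by positivity
  have hgd : gramDet B = Real.sqrt (∏ k, ‖g k‖ ^ 2) := by
    rw [gramDet, gram_det_eq hli]
  have hprod : PB ≤ Real.sqrt (2 ^ S) * gramDet B := by
    have h1 : PB = Real.sqrt (PB ^ 2) := (Real.sqrt_sq hPBnn).symm
    rw [h1, hgd, ← Real.sqrt_mul (by positivity)]
    exact Real.sqrt_le_sqrt hprodsq
  have hSle : (S : ℝ) ≤ (n:ℝ)^2 / 2 := by
    have h1 : S = ∑ m ∈ Finset.range n, m := by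
      rw [hS, Fin.sum_univ_eq_sum_range (fun m => m) n]
    have h2 : S * 2 = n * (n - 1) := by rw [h1]; exact Finset.sum_range_id_mul_two n
    have h3 : S * 2 ≤ n * n := by
      rw [h2]; exact Nat.mul_le_mul_left n (Nat.sub_le n 1)
    have h4 : ((S * 2 : ℕ) : ℝ) ≤ ((n * n : ℕ) : ℝ) := Nat.cast_le.mpr h3
    push_cast at h4
    nlinarith
  have hsqrt2S : Real.sqrt (2 ^ S) ≤ (2:ℝ) ^ ((n : ℝ) ^ 2 / 4) := by
    have h1 : ((2:ℝ) ^ S) = (2:ℝ) ^ ((S:ℝ)) := (Real.rpow_natCast 2 S).symm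
    rw [Real.sqrt_eq_rpow, h1, ← Real.rpow_mul (by norm_num)]
    apply Real.rpow_le_rpow_left_iff (x := (2:ℝ)) one_lt_two |>.mpr
    push_cast
    linarith
  have hprod2 : PB ≤ 2 ^ ((n : ℝ) ^ 2 / 4) * gramDet B := by
    calc PB ≤ Real.sqrt (2 ^ S) * gramDet B := hprod
      _ ≤ 2 ^ ((n : ℝ) ^ 2 / 4) * gramDet B := by
          apply mul_le_mul_of_nonneg_right hsqrt2S
          rw [hgd]; exact Real.sqrt_nonneg _
  -- lower bound on norms
  have hlow : ∀ i : Fin n, 1 / (q:ℝ) ≤ ‖B i‖ := by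
    intro i
    have hne : B i ≠ 0 := hli.ne_zero i
    have : ∃ t, B i t ≠ 0 := by
      by_contra hc
      push_neg at hc
      exact hne (by ext t; exact hc t)
    obtain ⟨t, ht⟩ := this
    obtain ⟨m, hm⟩ := hent i t
    have hmne : m ≠ 0 := by
      rintro rfl
      simp at hm
      exact ht hm
    have h1 : (1:ℝ) ≤ |(m:ℝ)| := by
      rw [← Int.cast_abs]
      exact_mod_cast Int.one_le_abs hmne
    have h2 : 1 / (q:ℝ) ≤ |B i t| := by
      rw [hm, abs_div, abs_of_pos hqpos]
      exact div_le_div_of_nonneg_right h1 hqpos.le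
    exact h2.trans (coord_le_norm _ _)
  -- first part
  have part1 : ∀ j : Fin n, ‖B j‖ ≤ (q : ℝ) ^ (n - 1) * 2 ^ ((n : ℝ) ^ 2 / 4) * gramDet B := by
    intro j
    have hP : ((1:ℝ)/q) ^ (n-1) ≤ ∏ i ∈ Finset.univ.erase j, ‖B i‖ := by
      have := Finset.prod_le_prod (s := Finset.univ.erase j)
        (f := fun _ => (1:ℝ)/q) (g := fun i => ‖B i‖)
        (fun i _ => by positivity) (fun i _ => hlow i)
      rwa [Finset.prod_const, Finset.card_erase_of_mem (Finset.mem_univ j),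
        Finset.card_univ, Fintype.card_fin] at this
    have hkey : ((1:ℝ)/q) ^ (n-1) * ‖B j‖ ≤ PB := by
      rw [hPB, ← Finset.prod_erase_mul Finset.univ _ (Finset.mem_univ j)]
      exact mul_le_mul_of_nonneg_right hP (norm_nonneg _)
    have hkey2 : ((1:ℝ)/q) ^ (n-1) * ‖B j‖ ≤ 2 ^ ((n : ℝ) ^ 2 / 4) * gramDet B :=
      hkey.trans hprod2
    have hqp : (0:ℝ) < (q:ℝ) ^ (n-1) := by positivity
    rw [one_div, inv_pow] at hkey2
    rw [mul_assoc]
    exact (inv_mul_le_iff₀ hqp).mp hkey2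
  refine ⟨part1, (q:ℝ)^n * (2 ^ ((n : ℝ) ^ 2 / 4) * gramDet B), ?_, ?_⟩
  · have hEq : ((2 : ℝ) ^ ((n : ℝ) / 4) * (q : ℝ)) ^ n * gramDet B
        = (q:ℝ)^n * (2 ^ ((n : ℝ) ^ 2 / 4) * gramDet B) := by
      rw [mul_pow]
      have : ((2 : ℝ) ^ ((n : ℝ) / 4)) ^ n = (2:ℝ) ^ ((n : ℝ) ^ 2 / 4) := by
        rw [← Real.rpow_natCast ((2:ℝ) ^ ((n : ℝ) / 4)) n, ← Real.rpow_mul (by norm_num)]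
        congr 1
        push_cast
        ring
      rw [this]
      ring
    rw [hEq]
  · intro j i
    have hn1 : 0 < n := j.pos
    have h1 : |B j i| ≤ (q : ℝ) ^ (n - 1) * 2 ^ ((n : ℝ) ^ 2 / 4) * gramDet B :=
      (coord_le_norm _ _).trans (part1 j)
    have hqn : (q:ℝ) ^ n = (q:ℝ) ^ (n-1) * q := by
      rw [← pow_succ, Nat.sub_add_cancel hn1]
    have hpq : (q:ℝ)^n * (2 ^ ((n : ℝ) ^ 2 / 4) * gramDet B) / q
        = (q : ℝ) ^ (n - 1) * 2 ^ ((n : ℝ) ^ 2 / 4) * gramDet B := by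
      rw [hqn]
      field_simp
    rw [hpq]
    exact h1
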